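/- In an augmented merge tree, under a minimal vertex perturbation where x passes y with (y,x) ∈ E(T_f), every edge (u,v) of T_f with {u,v} ∩ {x,y} = ∅ remains an edge of T_{f'}; moreover (x,y) ∈ E(T_{f'}), and if (x,p) ∈ E(T_f) then (y,p) ∈ E(T_{f'}). -/

import Mathlib

/-- `u` and `w` lie in the same connected component of the vertex set `S`
(connectivity via edges of `G` staying inside `S`). -/
def connIn {V : Type*} (G : SimpleGraph V) (S : Set V) (u w : V) : Prop :=
  u ∈ S ∧ w ∈ S ∧ Relation.ReflTransGen (fun a b => a ∈ S ∧ b ∈ S ∧ G.Adj a b) u w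

/-- Edge `(y,x)` of the augmented merge (split) tree of the field `f`. -/
def mtEdge {V : Type*} (G : SimpleGraph V) (f : V → ℝ) (y x : V) : Prop :=
  (∀ w, connIn G {z | f x < f z} y w → f y ≤ f w) ∧
  ∃ y', connIn G {z | f x < f z} y y' ∧ G.Adj x y'

private lemma exitLemma {V : Type*} (G : SimpleGraph V) {S : Set V} {y w : V}
    (h : Relation.ReflTransGen (fun a b => a ∈ S ∧ b ∈ S ∧ G.Adj a b) y w) :
    w = y ∨ (w ≠ y ∧ ∃ a, a ∈ S ∧ a ≠ y ∧ G.Adj y a ∧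
      Relation.ReflTransGen
        (fun a b => (a ∈ S ∧ a ≠ y) ∧ (b ∈ S ∧ b ≠ y) ∧ G.Adj a b) a w) := by
  induction h with
  | refl => exact Or.inl rfl
  | @tail b c hp hs ih =>
    obtain ⟨hbS, hcS, hadj⟩ := hs
    by_cases hcy : c = y
    · exact Or.inl hcy
    · rcases ih with hby | ⟨hbny, a, haS, hany, hya, hpath⟩
      · subst hby
        exact Or.inr ⟨hcy, c, hcS, hcy, hadj, Relation.ReflTransGen.refl⟩
      · exact Or.inr ⟨hcy, a, haS, hany, hya,
          hpath.tail ⟨⟨hbS, hbny⟩, ⟨hcS, hcy⟩, hadj⟩⟩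

private lemma rtgSymm {V : Type*} (G : SimpleGraph V) {S : Set V} {u w : V}
    (h : Relation.ReflTransGen (fun a b => a ∈ S ∧ b ∈ S ∧ G.Adj a b) u w) :
    Relation.ReflTransGen (fun a b => a ∈ S ∧ b ∈ S ∧ G.Adj a b) w u := by
  induction h with
  | refl => exact Relation.ReflTransGen.refl
  | tail _ hs ih =>
    exact Relation.ReflTransGen.head ⟨hs.2.1, hs.1, hs.2.2.symm⟩ ih

theorem stmt_7 {V : Type*} (G : SimpleGraph V) (f f' : V → ℝ)
    (hf : Function.Injective f) (hf' : Function.Injective f')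
    (x y : V) (hxy : x ≠ y)
    (hothers : ∀ w, w ≠ x → f' w = f w)
    (h1 : f x < f y) (h2 : f y < f' x)
    (hadjrank : ∀ z, z ≠ x → z ≠ y → f z < f x ∨ f' x < f z)
    (hedge : mtEdge G f y x) :
    (∀ u v, mtEdge G f u v → u ≠ x → u ≠ y → v ≠ x → v ≠ y → mtEdge G f' u v) ∧
    mtEdge G f' x y ∧
    (∀ p, mtEdge G f x p → mtEdge G f' y p) := by
  have hfy : f' y = f y := hothers y (Ne.symm hxy)
  have hxx : f x < f' x := h1.trans h2
  refine ⟨?_, ?_, ?_⟩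
  · -- part 1
    intro u v huv hux huy hvx hvy
    have hfv : f' v = f' v := rfl
    have hSeq : {z | f' v < f' z} = {z | f v < f z} := by
      ext z
      simp only [Set.mem_setOf_eq, hothers v hvx]
      by_cases hz : z = x
      · subst hz
        constructor
        · intro h
          rcases hadjrank v hvx hvy with h' | h'
          · exact h'
          · exact absurd h (not_lt.2 h'.le)
        · intro h; exact h.trans hxx
      · rw [hothers z hz]
    constructor
    · intro w hw
      rw [hSeq] at hw
      have hmin := huv.1 w hw
      rw [hothers u hux]
      by_cases hwx : w = x
      · subst hwx
        exact hmin.trans hxx.le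
      · rw [hothers w hwx]; exact hmin
    · obtain ⟨y', hc, hadj⟩ := huv.2
      exact ⟨y', by rw [hSeq]; exact hc, hadj⟩
  · -- part 2 : mtEdge G f' x y
    have hxS' : x ∈ {z | f' y < f' z} := by
      simp only [Set.mem_setOf_eq, hfy]; exact h2
    have hHsub : ∀ z, f x < f z → z ≠ y → z ∈ {z | f' y < f' z} ∧ z ≠ x := by
      intro z hz hzy
      have hzx : z ≠ x := by
        rintro rfl; exact lt_irrefl _ hz
      rcases hadjrank z hzx hzy with h' | h'
      · exact absurd hz (not_lt.2 h'.le)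
      · refine ⟨?_, hzx⟩
        simp only [Set.mem_setOf_eq, hfy, hothers z hzx]
        exact h2.trans h'
    constructor
    · intro w hw
      have hwS : f' y < f' w := hw.2.1
      by_cases hwx : w = x
      · subst hwx; exact le_refl _
      · have hfw : f' w = f w := hothers w hwx
        have hwy : w ≠ y := by
          rintro rfl; exact lt_irrefl _ hwS
        rcases hadjrank w hwx hwy with h' | h'
        · rw [hfy, hfw] at hwS
          exact absurd (h1.trans hwS) (not_lt.2 h'.le)
        · rw [hfw]; exact h'.le
    · obtain ⟨y', ⟨hyS, hy'S, hpath⟩, hadj⟩ := hedge.2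
      rcases exitLemma G hpath with hy'y | ⟨hy'ne, a, haS, hany, hya, hpath'⟩
      · subst hy'y
        exact ⟨x, ⟨hxS', hxS', Relation.ReflTransGen.refl⟩, hadj.symm⟩
      · have haS' := hHsub a haS hany
        have hy'S' := hHsub y' hy'S hy'ne
        -- path from y' to a inside {f' y < f' ·}
        have hpath2 : Relation.ReflTransGen
            (fun a b => a ∈ {z | f' y < f' z} ∧ b ∈ {z | f' y < f' z} ∧ G.Adj a b) y' a := by
          have hsym : Relation.ReflTransGen
              (fun a b => (a ∈ {z | f x < f z} ∧ a ≠ y) ∧ (b ∈ {z | f x < f z} ∧ b ≠ y) ∧ G.Adj a b)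
              y' a := by
            refine @Std.Symm.symm _ _ (@Relation.ReflTransGen.stdSymm _ _ ⟨?_⟩) _ _ hpath'
            intro p q hpq
            exact ⟨hpq.2.1, hpq.1, hpq.2.2.symm⟩
          refine Relation.ReflTransGen.mono ?_ _ _ hsym
          rintro p q ⟨⟨hpS, hpy⟩, ⟨hqS, hqy⟩, hpqadj⟩
          exact ⟨(hHsub p hpS hpy).1, (hHsub q hqS hqy).1, hpqadj⟩
        refine ⟨a, ⟨hxS', haS'.1, ?_⟩, hya⟩
        exact Relation.ReflTransGen.head ⟨hxS', hy'S'.1, hadj⟩ hpath2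
  · -- part 3
    intro p hp
    have hmin := hp.1
    obtain ⟨x', hcx', hpadj⟩ := hp.2
    have hxSp : f p < f x := hcx'.1
    have hpx : p ≠ x := fun h => by subst h; exact lt_irrefl _ hxSp
    have hpy : p ≠ y := fun h => by subst h; exact lt_asymm h1 hxSp
    have hSeq : {z | f' p < f' z} = {z | f p < f z} := by
      ext z
      simp only [Set.mem_setOf_eq, hothers p hpx]
      by_cases hz : z = x
      · subst hz
        constructor
        · intro _; exact hxSp
        · intro _; exact hxSp.trans hxx
      · rw [hothers z hz]
    have hSsub : {z | f x < f z} ⊆ {z | f p < f z} := fun z hz => hxSp.trans hz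
    obtain ⟨y0, ⟨hyS, hy0S, hpathy⟩, hxadj⟩ := hedge.2
    have hySp : f p < f y := hxSp.trans h1
    -- path y → x inside S_p
    have hyx : Relation.ReflTransGen
        (fun a b => a ∈ {z | f p < f z} ∧ b ∈ {z | f p < f z} ∧ G.Adj a b) y x := by
      have hlift : Relation.ReflTransGen
          (fun a b => a ∈ {z | f p < f z} ∧ b ∈ {z | f p < f z} ∧ G.Adj a b) y y0 := by
        refine Relation.ReflTransGen.mono ?_ _ _ hpathy
        rintro a b ⟨haS, hbS, hab⟩
        exact ⟨hSsub haS, hSsub hbS, hab⟩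
      exact hlift.tail ⟨hSsub hy0S, hxSp, hxadj.symm⟩
    constructor
    · intro w hw
      rw [show {z | f' p < f' z} = {z | f p < f z} from hSeq] at hw
      obtain ⟨hySp', hwSp, hpathyw⟩ := hw
      have hxw : connIn G {z | f p < f z} x w :=
        ⟨hxSp, hwSp, (rtgSymm G hyx).trans hpathyw⟩
      have hfxw := hmin w hxw
      rw [hfy]
      by_cases hwx : w = x
      · subst hwx; exact h2.le
      · rw [hothers w hwx]
        by_cases hwy : w = y
        · subst hwy; exact le_refl _
        · have hne : f x ≠ f w := fun h => hwx (hf h).symm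
          have hlt : f x < f w := lt_of_le_of_ne hfxw hne
          rcases hadjrank w hwx hwy with h' | h'
          · exact absurd hlt (not_lt.2 h'.le)
          · exact (h2.trans h').le
    · refine ⟨x', ?_, hpadj⟩
      rw [hSeq]
      exact ⟨hySp, hcx'.2.1, hyx.trans hcx'.2.2⟩
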